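/- Let h > 0, C > 0, and define F(p₁, p₂) = log₂(1 + (p₂·h²)/(1 + p₁·h²))/(p₂ + C) - exp(κ·p₂). Then the mixed partial derivative ∂²F/∂p₂∂p₁ is nonnegative if and only if p₂ ≥ sqrt(C·(p₁·h² + 1)/h²), for p₁, p₂ > 0. -/

import Mathlib

open Real Filter

lemma inner_hasDerivAt (h C κ : ℝ) (hh : 0 < h) (hC : 0 < C) (p₂ : ℝ) (hp₂ : 0 < p₂)
    (q₁ : ℝ) (hA : 0 < 1 + q₁ * h ^ 2) :
    HasDerivAt (fun q₂ : ℝ =>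
          Real.logb 2 (1 + (q₂ * h ^ 2) / (1 + q₁ * h ^ 2)) / (q₂ + C)
            - Real.exp (κ * q₂))
      ((h ^ 2 * (p₂ + C) / (1 + q₁ * h ^ 2 + p₂ * h ^ 2)
          - Real.log (1 + q₁ * h ^ 2 + p₂ * h ^ 2) + Real.log (1 + q₁ * h ^ 2))
        / (Real.log 2 * (p₂ + C) ^ 2) - κ * Real.exp (κ * p₂)) p₂ := by
  have hS : 0 < 1 + q₁ * h ^ 2 + p₂ * h ^ 2 := by positivity
  have hpC : 0 < p₂ + C := by linarith
  have hu : 0 < 1 + p₂ * h ^ 2 / (1 + q₁ * h ^ 2) := by positivity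
  have h2 : (0:ℝ) < Real.log 2 := Real.log_pos (by norm_num)
  have hlin : HasDerivAt (fun q₂ : ℝ => 1 + q₂ * h ^ 2 / (1 + q₁ * h ^ 2))
      (h ^ 2 / (1 + q₁ * h ^ 2)) p₂ := by
    have := (((hasDerivAt_id p₂).mul_const (h ^ 2)).div_const (1 + q₁ * h ^ 2)).const_add 1
    simpa using this
  have hlog := (hlin.log (ne_of_gt hu)).div_const (Real.log 2)
  have hden : HasDerivAt (fun q₂ : ℝ => q₂ + C) 1 p₂ := (hasDerivAt_id p₂).add_const C
  have hexp : HasDerivAt (fun q₂ : ℝ => Real.exp (κ * q₂)) (Real.exp (κ * p₂) * κ) p₂ := by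
    have := ((hasDerivAt_id p₂).const_mul κ).exp
    simpa using this
  have hmain := (hlog.div hden (ne_of_gt hpC)).sub hexp
  have heq : (fun q₂ : ℝ => Real.log (1 + q₂ * h ^ 2 / (1 + q₁ * h ^ 2)) / Real.log 2 / (q₂ + C)
      - Real.exp (κ * q₂))
      = (fun q₂ : ℝ => Real.logb 2 (1 + (q₂ * h ^ 2) / (1 + q₁ * h ^ 2)) / (q₂ + C)
            - Real.exp (κ * q₂)) := by
    funext q; simp [Real.logb]
  have hmain : HasDerivAt (fun q₂ : ℝ => Real.log (1 + q₂ * h ^ 2 / (1 + q₁ * h ^ 2)) / Real.log 2 / (q₂ + C)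
      - Real.exp (κ * q₂)) _ p₂ := hmain
  rw [heq] at hmain
  convert hmain using 1
  have hfrac : 1 + p₂ * h ^ 2 / (1 + q₁ * h ^ 2)
      = (1 + q₁ * h ^ 2 + p₂ * h ^ 2) / (1 + q₁ * h ^ 2) := by
    rw [eq_div_iff (ne_of_gt hA), add_mul, div_mul_cancel₀ _ (ne_of_gt hA)]; ring
  rw [hfrac, Real.log_div (ne_of_gt hS) (ne_of_gt hA)]
  rw [div_div_div_cancel_right₀ (ne_of_gt hA)]
  field_simp [ne_of_gt hS, ne_of_gt hA, ne_of_gt hpC, ne_of_gt h2]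
  ring

theorem ce_utility_supermodular_iff (h C κ : ℝ) (hh : 0 < h) (hC : 0 < C)
    (p₁ p₂ : ℝ) (hp₁ : 0 < p₁) (hp₂ : 0 < p₂) :
    0 ≤ deriv (fun q₁ : ℝ =>
        deriv (fun q₂ : ℝ =>
          Real.logb 2 (1 + (q₂ * h ^ 2) / (1 + q₁ * h ^ 2)) / (q₂ + C)
            - Real.exp (κ * q₂)) p₂) p₁
      ↔ p₂ ≥ Real.sqrt (C * (p₁ * h ^ 2 + 1) / h ^ 2) := by
  have hA : 0 < 1 + p₁ * h ^ 2 := by positivity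
  have hS : 0 < 1 + p₁ * h ^ 2 + p₂ * h ^ 2 := by positivity
  have hpC : 0 < p₂ + C := by linarith
  have h2 : (0:ℝ) < Real.log 2 := Real.log_pos (by norm_num)
  -- Step 1: replace outer function eventually
  have hev : (fun q₁ : ℝ =>
        deriv (fun q₂ : ℝ =>
          Real.logb 2 (1 + (q₂ * h ^ 2) / (1 + q₁ * h ^ 2)) / (q₂ + C)
            - Real.exp (κ * q₂)) p₂)
      =ᶠ[nhds p₁] (fun q₁ : ℝ =>
        (h ^ 2 * (p₂ + C) / (1 + q₁ * h ^ 2 + p₂ * h ^ 2)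
          - Real.log (1 + q₁ * h ^ 2 + p₂ * h ^ 2) + Real.log (1 + q₁ * h ^ 2))
        / (Real.log 2 * (p₂ + C) ^ 2) - κ * Real.exp (κ * p₂)) := by
    have hopen : ∀ᶠ q₁ in nhds p₁, 0 < 1 + q₁ * h ^ 2 := by
      have : ContinuousAt (fun q₁ : ℝ => 1 + q₁ * h ^ 2) p₁ := by fun_prop
      exact this.eventually (eventually_gt_nhds (by positivity))
    filter_upwards [hopen] with q₁ hq₁
    exact (inner_hasDerivAt h C κ hh hC p₂ hp₂ q₁ hq₁).deriv
  rw [hev.deriv_eq]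
  -- Step 2: compute outer derivative
  have houter : HasDerivAt (fun q₁ : ℝ =>
        (h ^ 2 * (p₂ + C) / (1 + q₁ * h ^ 2 + p₂ * h ^ 2)
          - Real.log (1 + q₁ * h ^ 2 + p₂ * h ^ 2) + Real.log (1 + q₁ * h ^ 2))
        / (Real.log 2 * (p₂ + C) ^ 2) - κ * Real.exp (κ * p₂))
      (((0 * (1 + p₁ * h ^ 2 + p₂ * h ^ 2) - h ^ 2 * (p₂ + C) * h ^ 2)
          / (1 + p₁ * h ^ 2 + p₂ * h ^ 2) ^ 2
        - h ^ 2 / (1 + p₁ * h ^ 2 + p₂ * h ^ 2) + h ^ 2 / (1 + p₁ * h ^ 2))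
        / (Real.log 2 * (p₂ + C) ^ 2)) p₁ := by
    have hSfun : HasDerivAt (fun q₁ : ℝ => 1 + q₁ * h ^ 2 + p₂ * h ^ 2) (h ^ 2) p₁ := by
      have := (((hasDerivAt_id p₁).mul_const (h ^ 2)).const_add 1).add_const (p₂ * h ^ 2)
      simpa using this
    have hAfun : HasDerivAt (fun q₁ : ℝ => 1 + q₁ * h ^ 2) (h ^ 2) p₁ := by
      have := ((hasDerivAt_id p₁).mul_const (h ^ 2)).const_add 1
      simpa using this
    have h1 := (hasDerivAt_const p₁ (h ^ 2 * (p₂ + C))).div hSfun (ne_of_gt hS)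
    have h2' := hSfun.log (ne_of_gt hS)
    have h3 := hAfun.log (ne_of_gt hA)
    exact (((h1.sub h2').add h3).div_const (Real.log 2 * (p₂ + C) ^ 2)).sub_const _
  rw [houter.deriv]
  -- Step 3: the sign analysis
  set A := 1 + p₁ * h ^ 2 with hAdef
  set S := 1 + p₁ * h ^ 2 + p₂ * h ^ 2 with hSdef
  have hN : (0 * S - h ^ 2 * (p₂ + C) * h ^ 2) / S ^ 2 - h ^ 2 / S + h ^ 2 / A
      = h ^ 4 * (h ^ 2 * p₂ ^ 2 - C * A) / (S ^ 2 * A) := by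
    have : S = A + p₂ * h ^ 2 := by rw [hAdef, hSdef]
    rw [this]
    field_simp
    ring
  rw [hN]
  have hD : (0:ℝ) < Real.log 2 * (p₂ + C) ^ 2 := by positivity
  rw [le_div_iff₀ hD, zero_mul]
  have hSA : (0:ℝ) < S ^ 2 * A := by positivity
  rw [le_div_iff₀ hSA, zero_mul]
  have h4 : (0:ℝ) < h ^ 4 := by positivity
  rw [mul_nonneg_iff_of_pos_left h4, sub_nonneg]
  rw [ge_iff_le, Real.sqrt_le_left (le_of_lt hp₂)]
  rw [div_le_iff₀ (by positivity : (0:ℝ) < h ^ 2)]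
  constructor
  · intro hle; nlinarith
  · intro hle; nlinarith
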